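/- The Jordan constant of the binary tetrahedral group (of order 24) equals 12. -/

import Mathlib

/-- `G` satisfies the Jordan property with constant `d`: every finite subgroup `H` of `G`
contains a normal abelian subgroup of index at most `d` in `H`. -/
def IsJordanWith (G : Type*) [Group G] (d : ℕ) : Prop :=
  ∀ H : Subgroup G, Finite H →
    ∃ A : Subgroup H, A.Normal ∧ (∀ x y : A, x * y = y * x) ∧ A.index ≤ d

/-- `G` is a Jordan group. -/
def IsJordanGroup (G : Type*) [Group G] : Prop :=
  ∃ d : ℕ, 0 < d ∧ IsJordanWith G d

/-- The Jordan constant of `G`: the minimal `d > 0` witnessing the Jordan property. -/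
noncomputable def jordanConstant (G : Type*) [Group G] : ℕ :=
  sInf {d : ℕ | 0 < d ∧ IsJordanWith G d}

namespace BinTet

abbrev G := Matrix.SpecialLinearGroup (Fin 2) (ZMod 3)

instance : DecidableEq G := fun a b =>
  @decidable_of_iff _ _ (Matrix.SpecialLinearGroup.ext_iff a b).symm (@Fintype.decidableForallFintype _ _ (fun i => @Fintype.decidableForallFintype _ _ (fun j => ZMod.decidableEq 3 _ _) _) _)

/-- The central element `-1`. -/
def w : G := ⟨!![2,0;0,2], by decide⟩

lemma hcard : Nat.card G = 24 := by rw [Nat.card_eq_fintype_card]; decide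

lemma w_sq : w ^ 2 = 1 := by decide

lemma w_ne_one : w ≠ 1 := by decide

lemma w_central : ∀ g : G, w * g = g * w := by decide

lemma key2 : ∀ x : G, x ≠ 1 → x ≠ w →
    ∃ g : G, (g * x * g⁻¹) * x ≠ x * (g * x * g⁻¹) := by decide

lemma orderOf_w : orderOf w = 2 := orderOf_eq_prime w_sq w_ne_one

lemma card_zpowers_w : Nat.card (Subgroup.zpowers w) = 2 := by
  rw [Nat.card_zpowers, orderOf_w]

lemma zpowers_w_normal : (Subgroup.zpowers w).Normal := by
  constructor
  intro n hn g
  obtain ⟨k, rfl⟩ := Subgroup.mem_zpowers_iff.mp hn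
  have hwg : Commute w g := w_central g
  have hk : Commute g (w ^ k) := (hwg.zpow_left k).symm
  have : g * w ^ k * g⁻¹ = w ^ k := by
    rw [hk.eq, mul_inv_cancel_right]
  rw [this]
  exact Subgroup.zpow_mem _ (Subgroup.mem_zpowers w) k

lemma index_zpowers_w : (Subgroup.zpowers w).index = 12 := by
  have h := Subgroup.card_mul_index (Subgroup.zpowers w)
  rw [card_zpowers_w, hcard] at h
  omega

lemma upper : IsJordanWith G 12 := by
  intro H _
  by_cases hH : H = ⊤
  · subst hH
    refine ⟨(Subgroup.zpowers w).comap (⊤ : Subgroup G).subtype,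
      zpowers_w_normal.comap _, ?_, ?_⟩
    · rintro ⟨x, hx⟩ ⟨y, hy⟩
      rw [Subgroup.mem_comap] at hx hy
      obtain ⟨a, ha⟩ := Subgroup.mem_zpowers_iff.mp hx
      obtain ⟨b, hb⟩ := Subgroup.mem_zpowers_iff.mp hy
      have ha' : w ^ a = (x : G) := ha
      have hb' : w ^ b = (y : G) := hb
      apply Subtype.ext
      apply Subtype.ext
      show ((x : G) * y) = ((y : G) * x)
      rw [← ha', ← hb', ← zpow_add, ← zpow_add, add_comm]
    · rw [Subgroup.index_comap, Subgroup.range_subtype, Subgroup.relIndex_top_right,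
        index_zpowers_w]
  · refine ⟨⊥, inferInstance, fun x y => Subsingleton.elim _ _, ?_⟩
    rw [Subgroup.index_bot]
    have h1 : Nat.card H ∣ 24 := hcard ▸ Subgroup.card_subgroup_dvd_card H
    have h2 : Nat.card H ≠ 24 := by
      intro he
      exact hH (Subgroup.eq_top_of_card_eq H (by rw [he, hcard]))
    obtain ⟨k, hk⟩ := h1
    rcases Nat.lt_or_ge k 2 with h | h
    · interval_cases k <;> omega
    · have h3 : Nat.card H * 2 ≤ Nat.card H * k := Nat.mul_le_mul_left _ h
      omega

lemma lower : ∀ d : ℕ, 0 < d → IsJordanWith G d → 12 ≤ d := by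
  intro d hd hJ
  by_contra hcon
  push_neg at hcon
  obtain ⟨A, hN, hab, hind⟩ := hJ ⊤ inferInstance
  have hcardtop : Nat.card (⊤ : Subgroup G) = 24 := by
    rw [Subgroup.card_top, hcard]
  have hmul := Subgroup.card_mul_index A
  rw [hcardtop] at hmul
  have hA3 : 3 ≤ Nat.card A := by nlinarith
  have hex : ∃ x : (⊤ : Subgroup G), x ∈ A ∧ (x : G) ≠ 1 ∧ (x : G) ≠ w := by
    by_contra hc
    push_neg at hc
    have hmem : ∀ z : A, ((z : (⊤ : Subgroup G)) : G) ∈ ({1, w} : Set G) := by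
      rintro ⟨z, hz⟩
      by_cases h1 : (z : G) = 1
      · exact h1 ▸ Set.mem_insert _ _
      · exact Set.mem_insert_of_mem _ (hc z hz h1)
    have hinj : Function.Injective
        (fun z : A => (⟨((z : (⊤ : Subgroup G)) : G), hmem z⟩ :
          ({1, w} : Set G))) := by
      intro a b hab'
      have hv : ((a : (⊤ : Subgroup G)) : G) = ((b : (⊤ : Subgroup G)) : G) :=
        congrArg (fun t : ({1, w} : Set G) => (t : G)) hab'
      exact Subtype.ext (Subtype.ext hv)

    have hle : Nat.card A ≤ Nat.card ({1, w} : Set G) :=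
      Nat.card_le_card_of_injective _ hinj
    have h2 : Nat.card ({1, w} : Set G) ≤ 2 := by
      rw [Nat.card_coe_set_eq]
      calc ({1, w} : Set G).ncard ≤ ({w} : Set G).ncard + 1 := Set.ncard_insert_le _ _
        _ = 2 := by rw [Set.ncard_singleton]
    omega
  obtain ⟨x, hxA, hx1, hxw⟩ := hex
  obtain ⟨g, hg⟩ := key2 (x : G) hx1 hxw
  set g' : (⊤ : Subgroup G) := ⟨g, trivial⟩ with hg'
  have hconj : g' * x * g'⁻¹ ∈ A := hN.conj_mem x hxA g'
  have hcomm := hab ⟨g' * x * g'⁻¹, hconj⟩ ⟨x, hxA⟩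
  have h3 := congrArg (fun z : A => ((z : (⊤ : Subgroup G)) : G)) hcomm
  exact hg h3

end BinTet

/-- The binary tetrahedral group (isomorphic to `SL(2, F₃)`, of order 24)
has Jordan constant `12`. -/
theorem jordanConstant_binaryTetrahedral :
    jordanConstant (Matrix.SpecialLinearGroup (Fin 2) (ZMod 3)) = 12 := by
  have hleast : IsLeast {d : ℕ | 0 < d ∧ IsJordanWith BinTet.G d} 12 :=
    ⟨⟨by norm_num, BinTet.upper⟩, fun d hd => BinTet.lower d hd.1 hd.2⟩
  exact hleast.csInf_eq
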